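/- Let 0 < T < ∞. Suppose g : (0,T] → [0,∞) is bounded and measurable, w : (0,T] → [0,∞) is non-decreasing, and g(t) ≤ w(t) ( (1/t) ∫₀ᵗ g(s)² ds )^{1/2} for every t ∈ (0,T]. Then g(t) = 0 for every t ∈ (0,T] with w(t) < 1. In particular, if w(t) ≤ 1/2 for 0 < t ≤ t₀ then g ≡ 0 on (0,t₀]. -/

import Mathlib

open MeasureTheory

/-- The iteration lemma at the core of the uniqueness theorem (Theorem 9.3): if
`g : (0,T] → [0,∞)` is bounded and measurable, `w : (0,T] → [0,∞)` is non-decreasing, and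
`g(t) ≤ w(t) ((1/t) ∫₀ᵗ g(s)² ds)^{1/2}` for all `t ∈ (0,T]`, then `g(t) = 0` whenever
`w(t) < 1`; in particular if `w ≤ 1/2` on `(0,t₀]` then `g ≡ 0` on `(0,t₀]`. -/
theorem uniqueness_iteration_lemma
    (T : ℝ) (hT : 0 < T) (g w : ℝ → ℝ)
    (hgmeas : AEMeasurable g (volume.restrict (Set.Ioc 0 T)))
    (hg0 : ∀ t ∈ Set.Ioc (0:ℝ) T, 0 ≤ g t)
    (hgbdd : ∃ C : ℝ, ∀ t ∈ Set.Ioc (0:ℝ) T, g t ≤ C)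
    (hw0 : ∀ t ∈ Set.Ioc (0:ℝ) T, 0 ≤ w t)
    (hwmono : ∀ s ∈ Set.Ioc (0:ℝ) T, ∀ t ∈ Set.Ioc (0:ℝ) T, s ≤ t → w s ≤ w t)
    (hiter : ∀ t ∈ Set.Ioc (0:ℝ) T,
      g t ≤ w t * Real.sqrt ((1 / t) * ∫ s in Set.Ioc (0:ℝ) t, g s ^ 2)) :
    (∀ t ∈ Set.Ioc (0:ℝ) T, w t < 1 → g t = 0)
    ∧ (∀ t₀ : ℝ, 0 < t₀ → t₀ ≤ T → (∀ t ∈ Set.Ioc (0:ℝ) t₀, w t ≤ 1/2) →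
        ∀ t ∈ Set.Ioc (0:ℝ) t₀, g t = 0) := by
  obtain ⟨C₀, hC₀⟩ := hgbdd
  set C : ℝ := max C₀ 0 with hCdef
  have hCnn : 0 ≤ C := le_max_right _ _
  have hC : ∀ t ∈ Set.Ioc (0:ℝ) T, g t ≤ C := fun t ht =>
    (hC₀ t ht).trans (le_max_left _ _)
  -- main induction
  have key : ∀ n : ℕ, ∀ t ∈ Set.Ioc (0:ℝ) T, g t ≤ C * w t ^ n := by
    intro n
    induction n with
    | zero => intro t ht; simpa using hC t ht
    | succ n ih =>
      intro t ht
      obtain ⟨ht0, htT⟩ := ht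
      set K : ℝ := C * w t ^ n with hKdef
      have hKnn : 0 ≤ K := mul_nonneg hCnn (pow_nonneg (hw0 t ⟨ht0, htT⟩) n)
      -- integral bound
      have hbound : ∀ s ∈ Set.Ioc (0:ℝ) t, ‖g s ^ 2‖ ≤ K ^ 2 := by
        intro s hs
        have hsT : s ∈ Set.Ioc (0:ℝ) T := ⟨hs.1, hs.2.trans htT⟩
        have h1 : g s ≤ C * w s ^ n := ih s hsT
        have h2 : w s ≤ w t := hwmono s hsT t ⟨ht0, htT⟩ hs.2
        have h3 : g s ≤ K := h1.trans (by
          apply mul_le_mul_of_nonneg_left _ hCnn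
          exact pow_le_pow_left₀ (hw0 s hsT) h2 n)
        rw [Real.norm_eq_abs, abs_of_nonneg (sq_nonneg _)]
        exact pow_le_pow_left₀ (hg0 s hsT) h3 2
      have hvol : (volume (Set.Ioc (0:ℝ) t)) < ⊤ := by
        rw [Real.volume_Ioc]; exact ENNReal.ofReal_lt_top
      have hint : ‖∫ s in Set.Ioc (0:ℝ) t, g s ^ 2‖ ≤
          K ^ 2 * (volume (Set.Ioc (0:ℝ) t)).toReal :=
        norm_setIntegral_le_of_norm_le_const hvol hbound
      have hvolval : (volume (Set.Ioc (0:ℝ) t)).toReal = t := by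
        rw [Real.volume_Ioc, ENNReal.toReal_ofReal (by linarith)]
        ring
      have hint' : (∫ s in Set.Ioc (0:ℝ) t, g s ^ 2) ≤ K ^ 2 * t := by
        calc (∫ s in Set.Ioc (0:ℝ) t, g s ^ 2) ≤ ‖∫ s in Set.Ioc (0:ℝ) t, g s ^ 2‖ :=
              le_abs_self _
          _ ≤ K ^ 2 * (volume (Set.Ioc (0:ℝ) t)).toReal := hint
          _ = K ^ 2 * t := by rw [hvolval]
      have havg : (1 / t) * (∫ s in Set.Ioc (0:ℝ) t, g s ^ 2) ≤ K ^ 2 := by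
        rw [div_mul_eq_mul_div, one_mul, div_le_iff₀ ht0]
        linarith [hint']
      have hsqrt : Real.sqrt ((1 / t) * ∫ s in Set.Ioc (0:ℝ) t, g s ^ 2) ≤ K := by
        calc Real.sqrt ((1 / t) * ∫ s in Set.Ioc (0:ℝ) t, g s ^ 2)
            ≤ Real.sqrt (K ^ 2) := Real.sqrt_le_sqrt havg
          _ = K := Real.sqrt_sq hKnn
      calc g t ≤ w t * Real.sqrt ((1 / t) * ∫ s in Set.Ioc (0:ℝ) t, g s ^ 2) :=
            hiter t ⟨ht0, htT⟩
        _ ≤ w t * K := mul_le_mul_of_nonneg_left hsqrt (hw0 t ⟨ht0, htT⟩)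
        _ = C * w t ^ (n + 1) := by rw [hKdef]; ring
  have main : ∀ t ∈ Set.Ioc (0:ℝ) T, w t < 1 → g t = 0 := by
    intro t ht hwt
    refine le_antisymm ?_ (hg0 t ht)
    have htend : Filter.Tendsto (fun n : ℕ => C * w t ^ n) Filter.atTop (nhds 0) := by
      have := tendsto_pow_atTop_nhds_zero_of_lt_one (hw0 t ht) hwt
      simpa using this.const_mul C
    exact ge_of_tendsto' htend (fun n => key n t ht)
  refine ⟨main, fun t₀ ht₀ ht₀T hw t ht => ?_⟩
  have htT : t ∈ Set.Ioc (0:ℝ) T := ⟨ht.1, ht.2.trans ht₀T⟩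
  exact main t htT (lt_of_le_of_lt (hw t ht) (by norm_num))
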